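/- Consider the system x_{t+1} = f(x_t, w_t), y_t = h(x_t, v_t) with state space X ⊆ ℝⁿ, noise sets W ⊆ ℝⁿ, V ⊆ ℝ^m. Suppose there exist V : X × X → ℝ≥0, functions α₁, α₂, α₃ of class K∞ and σ_w, σ_y, σ_v of class K such that for all x, z ∈ X, w_x, w_z ∈ W, v_x, v_z ∈ V: α₁(|x − z|) ≤ V(x,z) ≤ α₂(|x − z|) and V(f(x,w_x), f(z,w_z)) ≤ V(x,z) − α₃(|x − z|) + σ_w(|w_x − w_z|) + σ_y(|h(x,v_x) − h(z,v_z)|) + σ_v(|v_x − v_z|). Then there exists a K∞ function σ with σ(s) < s for all s > 0 such that, defining β(s,k) = σ^k(s) (the k-fold iterate of σ) and φ_ℓ(s) = 3·α₂(α₃^{-1}(6·σ_ℓ(s))) + 3·σ_ℓ(s) for ℓ ∈ {w, y, v}, every pair of trajectories x_{t+1} = f(x_t, w_{x,t}), z_{t+1} = f(z_t, w_{z,t}) with x_0, z_0 ∈ X, w_{x,t}, w_{z,t} ∈ W, v_{x,t}, v_{z,t} ∈ V satisfies, for all t ≥ 0: |x_t − z_t| ≤ max( α₁^{-1}(β(α₂(|x_0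 − z_0|), t)), max_{0≤i≤t−1} α₁^{-1}(β(φ_w(|w_{x,i} − w_{z,i}|), t−1−i)), max_{0≤i≤t−1} α₁^{-1}(β(φ_y(|h(x_i, v_{x,i}) − h(z_i, v_{z,i})|), t−1−i)), max_{0≤i≤t−1} α₁^{-1}(β(φ_v(|v_{x,i} − v_{z,i}|), t−1−i)) ). -/

import Mathlib

/-- max over i = 0, …, t-1 of g i (0 if t = 0). -/
def finMax (g : ℕ → ℝ) : ℕ → ℝ
  | 0 => 0
  | t + 1 => max (finMax g t) (g t)

/-- A function of class K on `ℝ≥0`. -/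
def IsK (α : ℝ → ℝ) : Prop :=
  ContinuousOn α (Set.Ici 0) ∧ StrictMonoOn α (Set.Ici 0) ∧ α 0 = 0

/-- A function of class K∞ on `ℝ≥0`. -/
def IsKInf (α : ℝ → ℝ) : Prop :=
  IsK α ∧ Filter.Tendsto α Filter.atTop Filter.atTop

/-- trajectory of `x_{t+1} = f (x_t, w_t)` -/
def traj {n : ℕ}
    (f : EuclideanSpace ℝ (Fin n) → EuclideanSpace ℝ (Fin n) → EuclideanSpace ℝ (Fin n))
    (x0 : EuclideanSpace ℝ (Fin n)) (w : ℕ → EuclideanSpace ℝ (Fin n)) :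
    ℕ → EuclideanSpace ℝ (Fin n)
  | 0 => x0
  | t + 1 => f (traj f x0 w t) (w t)


open Set Filter

lemma le_max_map (j : ℝ → ℝ) (p q : ℝ) : j (max p q) ≤ max (j p) (j q) := by
  rcases max_choice p q with hc | hc <;> rw [hc]
  · exact le_max_left _ _
  · exact le_max_right _ _

lemma le_max_map3 (j : ℝ → ℝ) (p q r : ℝ) :
    j (max p (max q r)) ≤ max (j p) (max (j q) (j r)) :=
  (le_max_map j p (max q r)).trans (max_le_max (le_refl _) (le_max_map j q r))

lemma finMax_nonneg (g : ℕ → ℝ) : ∀ t, 0 ≤ finMax g t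
  | 0 => le_refl 0
  | t + 1 => le_trans (finMax_nonneg g t) (le_max_left _ _)

lemma finMax_mono_fun {g g' : ℕ → ℝ} : ∀ t, (∀ i < t, g i ≤ g' i) → finMax g t ≤ finMax g' t
  | 0, _ => le_refl 0
  | t + 1, hle => max_le_max (finMax_mono_fun t fun i hi => hle i (Nat.lt_succ_of_lt hi))
      (hle t (Nat.lt_succ_self t))

lemma map_finMax_le (j : ℝ → ℝ) (hj0 : j 0 ≤ 0) :
    ∀ (t : ℕ) (g g' : ℕ → ℝ), (∀ i < t, j (g i) ≤ g' i) → j (finMax g t) ≤ finMax g' t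
  | 0, g, g', _ => hj0
  | t + 1, g, g', hle => by
    show j (max (finMax g t) (g t)) ≤ max (finMax g' t) (g' t)
    refine (le_max_map j _ _).trans (max_le_max ?_ (hle t (Nat.lt_succ_self t)))
    exact map_finMax_le j hj0 t g g' fun i hi => hle i (Nat.lt_succ_of_lt hi)

lemma isK_nonneg {k : ℝ → ℝ} (hk : IsK k) {s : ℝ} (hs : 0 ≤ s) : 0 ≤ k s := by
  rw [← hk.2.2]
  exact hk.2.1.monotoneOn (le_refl (0:ℝ)) hs hs

lemma isK_mono {k : ℝ → ℝ} (hk : IsK k) {p q : ℝ} (hp : 0 ≤ p) (hpq : p ≤ q) :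
    k p ≤ k q :=
  hk.2.1.monotoneOn hp (hp.trans hpq) hpq

noncomputable def psiF (α₂ α₃ : ℝ → ℝ) (v : ℝ) : ℝ :=
  sInf {y | ∃ e, 0 ≤ e ∧ v ≤ α₂ e ∧ y = α₃ e}

noncomputable def alphF (α₂ α₃ : ℝ → ℝ) (r : ℝ) : ℝ := min r (psiF α₂ α₃ r)

noncomputable def GF (α₂ α₃ : ℝ → ℝ) (s : ℝ) : ℝ :=
  sSup ((fun r => r - alphF α₂ α₃ r / 2) '' Set.Icc 0 s)

noncomputable def sigF (α₂ α₃ : ℝ → ℝ) (s : ℝ) : ℝ := (s + GF α₂ α₃ s) / 2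

section PsiLemmas

variable {α₂ α₃ : ℝ → ℝ}

lemma psiSet_nonempty (hα₂ : IsKInf α₂) (v : ℝ) : {y | ∃ e, 0 ≤ e ∧ v ≤ α₂ e ∧ y = α₃ e}.Nonempty := by
  obtain ⟨e, he0, hev⟩ := ((eventually_ge_atTop (0:ℝ)).and (hα₂.2.eventually_ge_atTop v)).exists
  exact ⟨α₃ e, e, he0, hev, rfl⟩

lemma psiSet_bddBelow (hα₃ : IsKInf α₃) (v : ℝ) :
    BddBelow {y | ∃ e, 0 ≤ e ∧ v ≤ α₂ e ∧ y = α₃ e} := by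
  refine ⟨0, ?_⟩
  rintro y ⟨e, he0, -, rfl⟩
  exact isK_nonneg hα₃.1 he0

lemma psiF_nonneg (hα₂ : IsKInf α₂) (hα₃ : IsKInf α₃) (v : ℝ) : 0 ≤ psiF α₂ α₃ v :=
  le_csInf (psiSet_nonempty hα₂ v) (by rintro y ⟨e, he0, -, rfl⟩; exact isK_nonneg hα₃.1 he0)

lemma psiF_le (hα₃ : IsKInf α₃) {v e : ℝ} (he0 : 0 ≤ e) (hve : v ≤ α₂ e) : psiF α₂ α₃ v ≤ α₃ e :=
  csInf_le (psiSet_bddBelow hα₃ v) ⟨e, he0, hve, rfl⟩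

lemma psiF_mono (hα₂ : IsKInf α₂) (hα₃ : IsKInf α₃) : Monotone (psiF α₂ α₃) := by
  intro v v' hvv'
  apply csInf_le_csInf (psiSet_bddBelow hα₃ v) (psiSet_nonempty hα₂ v')
  rintro y ⟨e, he0, hve, rfl⟩
  exact ⟨e, he0, hvv'.trans hve, rfl⟩

lemma psiF_pos (hα₂ : IsKInf α₂) (hα₃ : IsKInf α₃) {v : ℝ} (hv : 0 < v) : 0 < psiF α₂ α₃ v := by
  have hc : ContinuousWithinAt α₂ (Set.Ici 0) 0 := hα₂.1.1 0 (le_refl (0:ℝ))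
  have hev : ∀ᶠ e in nhdsWithin 0 (Set.Ici 0), α₂ e < v := by
    have := hc.tendsto
    rw [hα₂.1.2.2] at this
    exact this (Iio_mem_nhds hv)
  obtain ⟨δ, hδ0, hδ⟩ := Metric.mem_nhdsWithin_iff.mp hev
  have hkey : ∀ y ∈ {y | ∃ e, 0 ≤ e ∧ v ≤ α₂ e ∧ y = α₃ e}, α₃ (δ/2) ≤ y := by
    rintro y ⟨e, he0, hve, rfl⟩
    have heδ : δ ≤ e := by
      by_contra hlt
      push_neg at hlt
      have : e ∈ Metric.ball (0:ℝ) δ ∩ Set.Ici 0 := by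
        constructor
        · simp [Real.dist_eq, abs_of_nonneg he0, hlt]
        · exact he0
      exact absurd (hve.trans_lt (hδ this)) (lt_irrefl v)
    exact isK_mono hα₃.1 (by linarith) (by linarith)
  have h2 : 0 < α₃ (δ/2) := by
    rw [← hα₃.1.2.2]
    exact hα₃.1.2.1 (le_refl (0:ℝ)) (by positivity : (0:ℝ) ≤ δ/2) (by positivity)
  exact h2.trans_le (le_csInf (psiSet_nonempty hα₂ v) hkey)

lemma alphF_nonneg (hα₂ : IsKInf α₂) (hα₃ : IsKInf α₃) {r : ℝ} (hr : 0 ≤ r) : 0 ≤ alphF α₂ α₃ r :=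
  le_min hr (psiF_nonneg hα₂ hα₃ r)

lemma alphF_le_self (r : ℝ) : alphF α₂ α₃ r ≤ r := min_le_left _ _

lemma alphF_le_psi (r : ℝ) : alphF α₂ α₃ r ≤ psiF α₂ α₃ r := min_le_right _ _

lemma alphF_mono (hα₂ : IsKInf α₂) (hα₃ : IsKInf α₃) : Monotone (alphF α₂ α₃) :=
  monotone_id.min (psiF_mono hα₂ hα₃)

lemma alphF_pos (hα₂ : IsKInf α₂) (hα₃ : IsKInf α₃) {r : ℝ} (hr : 0 < r) : 0 < alphF α₂ α₃ r :=
  lt_min hr (psiF_pos hα₂ hα₃ hr)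

end PsiLemmas

section GLemmas

variable {α₂ α₃ : ℝ → ℝ}

lemma GF_bddAbove (hα₂ : IsKInf α₂) (hα₃ : IsKInf α₃) {s : ℝ} (hs : 0 ≤ s) :
    BddAbove ((fun r => r - alphF α₂ α₃ r / 2) '' Set.Icc 0 s) := by
  refine ⟨s, ?_⟩
  rintro y ⟨r, ⟨hr0, hrs⟩, rfl⟩
  have := alphF_nonneg hα₂ hα₃ hr0
  simp only
  linarith

lemma GF_image_nonempty {s : ℝ} (hs : 0 ≤ s) :
    ((fun r => r - alphF α₂ α₃ r / 2) '' Set.Icc 0 s).Nonempty :=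
  ⟨_, ⟨0, ⟨le_refl _, hs⟩, rfl⟩⟩

lemma alphF_zero (hα₂ : IsKInf α₂) (hα₃ : IsKInf α₃) : alphF α₂ α₃ 0 = 0 := by
  have := psiF_nonneg hα₂ hα₃ 0
  simp [alphF, min_eq_left this]

lemma GF_le_self (hα₂ : IsKInf α₂) (hα₃ : IsKInf α₃) {s : ℝ} (hs : 0 ≤ s) :
    GF α₂ α₃ s ≤ s := by
  apply csSup_le (GF_image_nonempty hs)
  rintro y ⟨r, ⟨hr0, hrs⟩, rfl⟩
  have := alphF_nonneg hα₂ hα₃ hr0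
  simp only
  linarith

lemma le_GF (hα₂ : IsKInf α₂) (hα₃ : IsKInf α₃) {s r : ℝ} (hr0 : 0 ≤ r) (hrs : r ≤ s) :
    r - alphF α₂ α₃ r / 2 ≤ GF α₂ α₃ s :=
  le_csSup (GF_bddAbove hα₂ hα₃ (hr0.trans hrs)) ⟨r, ⟨hr0, hrs⟩, rfl⟩

lemma GF_nonneg (hα₂ : IsKInf α₂) (hα₃ : IsKInf α₃) {s : ℝ} (hs : 0 ≤ s) :
    0 ≤ GF α₂ α₃ s := by
  have h := le_GF hα₂ hα₃ (le_refl (0:ℝ)) hs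
  rwa [alphF_zero hα₂ hα₃, zero_div, sub_zero] at h

lemma GF_of_neg {s : ℝ} (hs : s < 0) : GF α₂ α₃ s = 0 := by
  have : Set.Icc (0:ℝ) s = ∅ := Set.Icc_eq_empty (by linarith)
  simp [GF, this, Real.sSup_empty]

lemma GF_mono (hα₂ : IsKInf α₂) (hα₃ : IsKInf α₃) : Monotone (GF α₂ α₃) := by
  intro s s' hss'
  rcases lt_or_ge s 0 with hs | hs
  · rw [GF_of_neg hs]
    rcases lt_or_ge s' 0 with hs' | hs'
    · rw [GF_of_neg hs']
    · exact GF_nonneg hα₂ hα₃ hs'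
  · apply csSup_le_csSup (GF_bddAbove hα₂ hα₃ (hs.trans hss')) (GF_image_nonempty hs)
    exact Set.image_mono (Set.Icc_subset_Icc_right hss')

lemma GF_lip (hα₂ : IsKInf α₂) (hα₃ : IsKInf α₃) {s s' : ℝ} (hs : 0 ≤ s) (hss' : s ≤ s') :
    GF α₂ α₃ s' ≤ GF α₂ α₃ s + (s' - s) := by
  apply csSup_le (GF_image_nonempty (hs.trans hss'))
  rintro y ⟨r, ⟨hr0, hrs'⟩, rfl⟩
  rcases le_or_gt r s with hrs | hsr
  · have := le_GF hα₂ hα₃ hr0 hrs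
    simp only; linarith
  · have h1 : alphF α₂ α₃ s ≤ alphF α₂ α₃ r := alphF_mono hα₂ hα₃ hsr.le
    have h2 := le_GF hα₂ hα₃ hs (le_refl s)
    simp only; linarith

lemma GF_lt_self (hα₂ : IsKInf α₂) (hα₃ : IsKInf α₃) {s : ℝ} (hs : 0 < s) :
    GF α₂ α₃ s < s := by
  have hbound : GF α₂ α₃ s ≤ max (s/2) (s - alphF α₂ α₃ (s/2) / 2) := by
    apply csSup_le (GF_image_nonempty hs.le)
    rintro y ⟨r, ⟨hr0, hrs⟩, rfl⟩
    rcases le_or_gt r (s/2) with hr | hr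
    · refine le_max_of_le_left ?_
      have := alphF_nonneg hα₂ hα₃ hr0
      simp only; linarith
    · refine le_max_of_le_right ?_
      have := alphF_mono hα₂ hα₃ hr.le
      simp only; linarith
  have hpos : 0 < alphF α₂ α₃ (s/2) := alphF_pos hα₂ hα₃ (by linarith)
  exact hbound.trans_lt (max_lt (by linarith) (by linarith))

end GLemmas

section SigLemmas

variable {α₂ α₃ : ℝ → ℝ}

lemma sigF_strictMono (hα₂ : IsKInf α₂) (hα₃ : IsKInf α₃) : StrictMono (sigF α₂ α₃) := by
  intro s s' hss'
  have := GF_mono hα₂ hα₃ hss'.le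
  simp only [sigF]
  linarith

lemma sigF_zero (hα₂ : IsKInf α₂) (hα₃ : IsKInf α₃) : sigF α₂ α₃ 0 = 0 := by
  have h1 := GF_nonneg hα₂ hα₃ (le_refl (0:ℝ))
  have h2 := GF_le_self hα₂ hα₃ (le_refl (0:ℝ))
  simp only [sigF]
  linarith

lemma sigF_lt_self (hα₂ : IsKInf α₂) (hα₃ : IsKInf α₃) {s : ℝ} (hs : 0 < s) :
    sigF α₂ α₃ s < s := by
  have := GF_lt_self hα₂ hα₃ hs
  simp only [sigF]; linarith

lemma half_le_sigF (hα₂ : IsKInf α₂) (hα₃ : IsKInf α₃) {s : ℝ} (hs : 0 ≤ s) :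
    s / 2 ≤ sigF α₂ α₃ s := by
  have := GF_nonneg hα₂ hα₃ hs
  simp only [sigF]; linarith

lemma sigF_nonneg (hα₂ : IsKInf α₂) (hα₃ : IsKInf α₃) {s : ℝ} (hs : 0 ≤ s) :
    0 ≤ sigF α₂ α₃ s :=
  le_trans (by linarith) (half_le_sigF hα₂ hα₃ hs)

lemma sigF_key (hα₂ : IsKInf α₂) (hα₃ : IsKInf α₃) {v : ℝ} (hv : 0 ≤ v) :
    v - psiF α₂ α₃ v / 4 ≤ sigF α₂ α₃ v := by
  have h1 := le_GF hα₂ hα₃ hv (le_refl v)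
  have h2 := alphF_le_psi (α₂ := α₂) (α₃ := α₃) v
  simp only [sigF]
  linarith

lemma sigF_lipschitz (hα₂ : IsKInf α₂) (hα₃ : IsKInf α₃) :
    LipschitzWith 1 (sigF α₂ α₃) := by
  have key : ∀ s s' : ℝ, s ≤ s' → sigF α₂ α₃ s' - sigF α₂ α₃ s ≤ s' - s := by
    intro s s' hss'
    have hG : GF α₂ α₃ s' - GF α₂ α₃ s ≤ s' - s := by
      rcases le_or_gt 0 s with hs | hs
      · have := GF_lip hα₂ hα₃ hs hss'
        linarith
      · rw [GF_of_neg hs]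
        rcases le_or_gt 0 s' with hs' | hs'
        · have := GF_le_self hα₂ hα₃ hs'
          linarith
        · rw [GF_of_neg hs']
          linarith
    simp only [sigF]
    linarith
  rw [lipschitzWith_iff_dist_le_mul]
  intro x y
  rw [NNReal.coe_one, one_mul, Real.dist_eq, Real.dist_eq]
  rcases le_total x y with hxy | hxy
  · have h1 := key x y hxy
    have h2 := (sigF_strictMono hα₂ hα₃).monotone hxy
    rw [abs_of_nonpos (by linarith), abs_of_nonpos (by linarith)]
    linarith
  · have h1 := key y x hxy
    have h2 := (sigF_strictMono hα₂ hα₃).monotone hxy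
    rw [abs_of_nonneg (by linarith), abs_of_nonneg (by linarith)]
    linarith

lemma sigF_tendsto (hα₂ : IsKInf α₂) (hα₃ : IsKInf α₃) :
    Filter.Tendsto (sigF α₂ α₃) Filter.atTop Filter.atTop := by
  have h2 : Filter.Tendsto (fun s : ℝ => s / 2) Filter.atTop Filter.atTop :=
    Filter.tendsto_id.atTop_div_const (by norm_num)
  apply Filter.tendsto_atTop_mono' _ ?_ h2
  filter_upwards [Filter.eventually_ge_atTop (0:ℝ)] with s hs
  exact half_le_sigF hα₂ hα₃ hs

lemma sigF_isKInf (hα₂ : IsKInf α₂) (hα₃ : IsKInf α₃) : IsKInf (sigF α₂ α₃) :=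
  ⟨⟨((sigF_lipschitz hα₂ hα₃).continuous).continuousOn,
    (sigF_strictMono hα₂ hα₃).strictMonoOn _,
    sigF_zero hα₂ hα₃⟩, sigF_tendsto hα₂ hα₃⟩

lemma sigF_iter_nonneg (hα₂ : IsKInf α₂) (hα₃ : IsKInf α₃) {s : ℝ} (hs : 0 ≤ s) (k : ℕ) :
    0 ≤ (sigF α₂ α₃)^[k] s := by
  induction k with
  | zero => simpa using hs
  | succ k ih =>
    rw [Function.iterate_succ_apply']
    exact sigF_nonneg hα₂ hα₃ ih

end SigLemmas

/-- **Lyapunov characterization of i-UIOSS with multiplicative measurement noise.**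
If `V` is an i-UIOSS Lyapunov function for `x_{t+1} = f(x_t,w_t)`, `y_t = h(x_t,v_t)`,
i.e. `α₁(|x−z|) ≤ V(x,z) ≤ α₂(|x−z|)` and
`V(f(x,w_x), f(z,w_z)) ≤ V(x,z) − α₃(|x−z|) + σ_w(|w_x−w_z|) + σ_y(|h(x,v_x)−h(z,v_z)|)
+ σ_v(|v_x−v_z|)`, then there is a K∞ function `σ` with `σ(s) < s` for `s > 0` such
that every pair of trajectories satisfies the i-UIOSS estimate with
`β(s,k) = σ^[k](s)` and `φ_ℓ(s) = 3α₂(α₃⁻¹(6σ_ℓ(s))) + 3σ_ℓ(s)`. -/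
theorem stmt15 {n m : ℕ}
    (X W : Set (EuclideanSpace ℝ (Fin n))) (Vset : Set (EuclideanSpace ℝ (Fin m)))
    (f : EuclideanSpace ℝ (Fin n) → EuclideanSpace ℝ (Fin n) → EuclideanSpace ℝ (Fin n))
    (h : EuclideanSpace ℝ (Fin n) → EuclideanSpace ℝ (Fin m) → EuclideanSpace ℝ (Fin m))
    (hfX : ∀ x ∈ X, ∀ w ∈ W, f x w ∈ X)
    (V : EuclideanSpace ℝ (Fin n) → EuclideanSpace ℝ (Fin n) → ℝ)
    (α₁ α₂ α₃ : ℝ → ℝ) (hα₁ : IsKInf α₁) (hα₂ : IsKInf α₂) (hα₃ : IsKInf α₃)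
    (σw σy σv : ℝ → ℝ) (hσw : IsK σw) (hσy : IsK σy) (hσv : IsK σv)
    -- the inverses of the K∞ functions α₁ and α₃ on ℝ≥0
    (α₁inv α₃inv : ℝ → ℝ)
    (hα₁inv : ∀ s : ℝ, 0 ≤ s → α₁ (α₁inv s) = s ∧ α₁inv (α₁ s) = s ∧ 0 ≤ α₁inv s)
    (hα₃inv : ∀ s : ℝ, 0 ≤ s → α₃ (α₃inv s) = s ∧ α₃inv (α₃ s) = s ∧ 0 ≤ α₃inv s)
    (hsand : ∀ x ∈ X, ∀ z ∈ X, α₁ ‖x - z‖ ≤ V x z ∧ V x z ≤ α₂ ‖x - z‖)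
    (hdissip : ∀ x ∈ X, ∀ z ∈ X, ∀ wx ∈ W, ∀ wz ∈ W, ∀ vx ∈ Vset, ∀ vz ∈ Vset,
      V (f x wx) (f z wz) ≤
        V x z - α₃ ‖x - z‖ + σw ‖wx - wz‖ + σy ‖h x vx - h z vz‖ + σv ‖vx - vz‖) :
    ∃ σ : ℝ → ℝ, IsKInf σ ∧ (∀ s : ℝ, 0 < s → σ s < s) ∧
      ∀ (x0 z0 : EuclideanSpace ℝ (Fin n)) (wx wz : ℕ → EuclideanSpace ℝ (Fin n))
        (vx vz : ℕ → EuclideanSpace ℝ (Fin m)),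
        x0 ∈ X → z0 ∈ X → (∀ i, wx i ∈ W) → (∀ i, wz i ∈ W) →
        (∀ i, vx i ∈ Vset) → (∀ i, vz i ∈ Vset) →
        ∀ t : ℕ,
          ‖traj f x0 wx t - traj f z0 wz t‖ ≤
            max (α₁inv (σ^[t] (α₂ ‖x0 - z0‖)))
              (finMax (fun i =>
                max (α₁inv (σ^[t - 1 - i]
                    (3 * α₂ (α₃inv (6 * σw ‖wx i - wz i‖)) + 3 * σw ‖wx i - wz i‖)))
                  (max (α₁inv (σ^[t - 1 - i]
                      (3 * α₂ (α₃inv (6 * σy ‖h (traj f x0 wx i) (vx i) -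
                          h (traj f z0 wz i) (vz i)‖)) +
                        3 * σy ‖h (traj f x0 wx i) (vx i) - h (traj f z0 wz i) (vz i)‖)))
                    (α₁inv (σ^[t - 1 - i]
                      (3 * α₂ (α₃inv (6 * σv ‖vx i - vz i‖)) + 3 * σv ‖vx i - vz i‖))))) t) := by
  refine ⟨sigF α₂ α₃, sigF_isKInf hα₂ hα₃, fun s hs => sigF_lt_self hα₂ hα₃ hs, ?_⟩
  intro x0 z0 wx wz vx vz hx0 hz0 hwx hwz hvx hvz
  set σ := sigF α₂ α₃ with hσdef
  set xs := traj f x0 wx with hxsdef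
  set zs := traj f z0 wz with hzsdef
  have hσmono : Monotone σ := (sigF_strictMono hα₂ hα₃).monotone
  have hσ0 : σ 0 = 0 := sigF_zero hα₂ hα₃
  have hxs : ∀ t, xs t ∈ X := by
    intro t; induction t with
    | zero => exact hx0
    | succ t ih => exact hfX _ ih _ (hwx t)
  have hzs : ∀ t, zs t ∈ X := by
    intro t; induction t with
    | zero => exact hz0
    | succ t ih => exact hfX _ ih _ (hwz t)
  set e : ℕ → ℝ := fun t => ‖xs t - zs t‖ with hedef
  set Vt : ℕ → ℝ := fun t => V (xs t) (zs t) with hVtdef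
  set a : ℕ → ℝ := fun i => σw ‖wx i - wz i‖ with hadef
  set b : ℕ → ℝ := fun i => σy ‖h (xs i) (vx i) - h (zs i) (vz i)‖ with hbdef
  set c : ℕ → ℝ := fun i => σv ‖vx i - vz i‖ with hcdef
  set Φ : ℕ → ℝ := fun i => max (3 * α₂ (α₃inv (6 * a i)) + 3 * a i)
      (max (3 * α₂ (α₃inv (6 * b i)) + 3 * b i)
        (3 * α₂ (α₃inv (6 * c i)) + 3 * c i)) with hΦdef
  have ha : ∀ i, 0 ≤ a i := fun i => isK_nonneg hσw (norm_nonneg _)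
  have hb : ∀ i, 0 ≤ b i := fun i => isK_nonneg hσy (norm_nonneg _)
  have hc : ∀ i, 0 ≤ c i := fun i => isK_nonneg hσv (norm_nonneg _)
  have he : ∀ t, 0 ≤ e t := fun t => norm_nonneg _
  have hV1 : ∀ t, α₁ (e t) ≤ Vt t := fun t => (hsand _ (hxs t) _ (hzs t)).1
  have hV2 : ∀ t, Vt t ≤ α₂ (e t) := fun t => (hsand _ (hxs t) _ (hzs t)).2
  have hV0 : ∀ t, 0 ≤ Vt t := fun t => (isK_nonneg hα₁.1 (he t)).trans (hV1 t)
  -- monotonicity of the inverses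
  have hinvmono : ∀ (α αinv : ℝ → ℝ), StrictMonoOn α (Set.Ici 0) →
      (∀ s, 0 ≤ s → α (αinv s) = s ∧ αinv (α s) = s ∧ 0 ≤ αinv s) →
      ∀ p q : ℝ, 0 ≤ p → p ≤ q → αinv p ≤ αinv q := by
    intro α αinv hmono hinv p q hp hpq
    by_contra hlt
    push_neg at hlt
    have h1 := hinv p hp
    have h2 := hinv q (hp.trans hpq)
    have h3 := hmono h2.2.2 h1.2.2 hlt
    rw [h1.1, h2.1] at h3
    linarith
  -- key one-step estimate
  have key : ∀ t, Vt (t + 1) ≤ max (σ (Vt t)) (Φ t) := by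
    intro t
    have hd := hdissip _ (hxs t) _ (hzs t) _ (hwx t) _ (hwz t) _ (hvx t) _ (hvz t)
    have hα₃e : 0 ≤ α₃ (e t) := isK_nonneg hα₃.1 (he t)
    have hVt1 : Vt (t + 1) ≤ Vt t - α₃ (e t) + (a t + b t + c t) := by
      have hxe : xs (t + 1) = f (xs t) (wx t) := rfl
      have hze : zs (t + 1) = f (zs t) (wz t) := rfl
      show V (xs (t + 1)) (zs (t + 1)) ≤ _
      rw [hxe, hze]
      calc V (f (xs t) (wx t)) (f (zs t) (wz t)) ≤
          V (xs t) (zs t) - α₃ ‖xs t - zs t‖ + σw ‖wx t - wz t‖ +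
            σy ‖h (xs t) (vx t) - h (zs t) (vz t)‖ + σv ‖vx t - vz t‖ := hd
        _ = Vt t - α₃ (e t) + (a t + b t + c t) := by ring
    set u := a t + b t + c t with hudef
    have hu0 : 0 ≤ u := by have := ha t; have := hb t; have := hc t; positivity
    rcases le_or_gt u (α₃ (e t) / 2) with hcase | hcase
    · refine le_max_of_le_left ?_
      have hψ : psiF α₂ α₃ (Vt t) ≤ α₃ (e t) := psiF_le hα₃ (he t) (hV2 t)
      have hk := sigF_key hα₂ hα₃ (hV0 t)
      rw [hσdef]
      linarith
    · refine le_max_of_le_right ?_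
      have h2u : 0 ≤ 2 * u := by linarith
      have hei : e t ≤ α₃inv (2 * u) := by
        by_contra hlt
        push_neg at hlt
        have hi := hα₃inv (2 * u) h2u
        have h3 := hα₃.1.2.1 hi.2.2 (he t) hlt
        rw [hi.1] at h3
        linarith
      have hV2' : Vt t ≤ α₂ (α₃inv (2 * u)) :=
        (hV2 t).trans (isK_mono hα₂.1 (he t) hei)
      set M := max (a t) (max (b t) (c t)) with hMdef
      have hMa : a t ≤ M := le_max_left _ _
      have hMb : b t ≤ M := le_trans (le_max_left _ _) (le_max_right _ _)
      have hMc : c t ≤ M := le_trans (le_max_right _ _) (le_max_right _ _)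
      have hM0 : 0 ≤ M := (ha t).trans hMa
      have huM : u ≤ 3 * M := by rw [hudef]; linarith
      have h6M : 0 ≤ 6 * M := by linarith
      have hinv2u : 0 ≤ α₃inv (2 * u) := (hα₃inv _ h2u).2.2
      have hmono36 : α₂ (α₃inv (2 * u)) ≤ α₂ (α₃inv (6 * M)) :=
        isK_mono hα₂.1 hinv2u
          (hinvmono α₃ α₃inv hα₃.1.2.1 hα₃inv (2 * u) (6 * M) h2u (by linarith))
      have hα₂nn : 0 ≤ α₂ (α₃inv (6 * M)) := isK_nonneg hα₂.1 (hα₃inv _ h6M).2.2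
      have hfin : Vt (t + 1) ≤ 3 * α₂ (α₃inv (6 * M)) + 3 * M := by linarith
      have hMcases : M = a t ∨ M = b t ∨ M = c t := by
        rcases max_choice (a t) (max (b t) (c t)) with hc1 | hc1
        · exact Or.inl hc1
        · rcases max_choice (b t) (c t) with hc2 | hc2
          · exact Or.inr (Or.inl (hc1.trans hc2))
          · exact Or.inr (Or.inr (hc1.trans hc2))
      rcases hMcases with hMeq | hMeq | hMeq
      · rw [hMeq] at hfin
        exact hfin.trans (le_max_left _ _)
      · rw [hMeq] at hfin
        exact hfin.trans (le_trans (le_max_left _ _) (le_max_right _ _))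
      · rw [hMeq] at hfin
        exact hfin.trans (le_trans (le_max_right _ _) (le_max_right _ _))
  -- main induction at the level of V
  have main : ∀ t, Vt t ≤ max (σ^[t] (α₂ (e 0)))
      (finMax (fun i => σ^[t - 1 - i] (Φ i)) t) := by
    intro t
    induction t with
    | zero =>
      refine le_max_of_le_left ?_
      simpa using hV2 0
    | succ t ih =>
      have hk := key t
      have hstep : σ (Vt t) ≤
          max (σ (σ^[t] (α₂ (e 0)))) (σ (finMax (fun i => σ^[t - 1 - i] (Φ i)) t)) := by
        rw [← hσmono.map_max]
        exact hσmono ih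
      have hA : σ (σ^[t] (α₂ (e 0))) = σ^[t + 1] (α₂ (e 0)) :=
        (Function.iterate_succ_apply' σ t _).symm
      have hB : σ (finMax (fun i => σ^[t - 1 - i] (Φ i)) t) ≤
          finMax (fun i => σ^[t - i] (Φ i)) t := by
        apply map_finMax_le σ (le_of_eq hσ0)
        intro i hi
        have : σ (σ^[t - 1 - i] (Φ i)) = σ^[t - 1 - i + 1] (Φ i) :=
          (Function.iterate_succ_apply' σ _ _).symm
        rw [this]
        have harith : t - 1 - i + 1 = t - i := by omega
        rw [harith]
      have hfmax : finMax (fun i => σ^[t + 1 - 1 - i] (Φ i)) (t + 1) =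
          max (finMax (fun i => σ^[t - i] (Φ i)) t) (Φ t) := by
        have h1 : (fun i => σ^[t + 1 - 1 - i] (Φ i)) = fun i => σ^[t - i] (Φ i) := by
          funext i; congr 1
        rw [h1]
        show max _ _ = _
        congr 1
        simp [Nat.sub_self]
      rw [hfmax]
      refine hk.trans (max_le ?_ ?_)
      · refine (hstep.trans (max_le_max (le_of_eq hA) hB)).trans ?_
        exact max_le_max (le_refl _) (le_max_left _ _)
      · exact le_max_of_le_right (le_max_right _ _)
  -- from V-level to the norm-level estimate
  intro t
  have hα₁e : 0 ≤ α₁ (e t) := isK_nonneg hα₁.1 (he t)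
  have hmax0 : Vt t ≤ max (σ^[t] (α₂ (e 0))) (finMax (fun i => σ^[t - 1 - i] (Φ i)) t) :=
    main t
  have hRHS0 : 0 ≤ max (σ^[t] (α₂ (e 0))) (finMax (fun i => σ^[t - 1 - i] (Φ i)) t) :=
    (hV0 t).trans hmax0
  have step1 : e t ≤ α₁inv (Vt t) := by
    have h1 := hinvmono α₁ α₁inv hα₁.1.2.1 hα₁inv (α₁ (e t)) (Vt t) hα₁e (hV1 t)
    rwa [(hα₁inv (e t) (he t)).2.1] at h1
  have step2 : α₁inv (Vt t) ≤
      α₁inv (max (σ^[t] (α₂ (e 0))) (finMax (fun i => σ^[t - 1 - i] (Φ i)) t)) :=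
    hinvmono α₁ α₁inv hα₁.1.2.1 hα₁inv _ _ (hV0 t) hmax0
  have step3 : α₁inv (max (σ^[t] (α₂ (e 0))) (finMax (fun i => σ^[t - 1 - i] (Φ i)) t)) ≤
      max (α₁inv (σ^[t] (α₂ (e 0)))) (α₁inv (finMax (fun i => σ^[t - 1 - i] (Φ i)) t)) :=
    le_max_map α₁inv _ _
  have hinv0 : α₁inv 0 ≤ 0 := by
    have := (hα₁inv 0 (le_refl 0)).2.1
    rw [hα₁.1.2.2] at this
    exact le_of_eq this
  have step4 : α₁inv (finMax (fun i => σ^[t - 1 - i] (Φ i)) t) ≤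
      finMax (fun i =>
        max (α₁inv (σ^[t - 1 - i] (3 * α₂ (α₃inv (6 * a i)) + 3 * a i)))
          (max (α₁inv (σ^[t - 1 - i] (3 * α₂ (α₃inv (6 * b i)) + 3 * b i)))
            (α₁inv (σ^[t - 1 - i] (3 * α₂ (α₃inv (6 * c i)) + 3 * c i))))) t := by
    apply map_finMax_le α₁inv hinv0
    intro i hi
    have hiter : σ^[t - 1 - i] (Φ i) =
        max (σ^[t - 1 - i] (3 * α₂ (α₃inv (6 * a i)) + 3 * a i))
          (max (σ^[t - 1 - i] (3 * α₂ (α₃inv (6 * b i)) + 3 * b i))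
            (σ^[t - 1 - i] (3 * α₂ (α₃inv (6 * c i)) + 3 * c i))) := by
      rw [hΦdef]
      simp only
      rw [(hσmono.iterate (t - 1 - i)).map_max, (hσmono.iterate (t - 1 - i)).map_max]
    rw [hiter]
    exact le_max_map3 α₁inv _ _ _
  calc ‖xs t - zs t‖ = e t := rfl
    _ ≤ α₁inv (Vt t) := step1
    _ ≤ _ := step2
    _ ≤ _ := step3
    _ ≤ max (α₁inv (σ^[t] (α₂ (e 0))))
        (finMax (fun i =>
          max (α₁inv (σ^[t - 1 - i] (3 * α₂ (α₃inv (6 * a i)) + 3 * a i)))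
            (max (α₁inv (σ^[t - 1 - i] (3 * α₂ (α₃inv (6 * b i)) + 3 * b i)))
              (α₁inv (σ^[t - 1 - i] (3 * α₂ (α₃inv (6 * c i)) + 3 * c i))))) t) :=
        max_le_max (le_refl _) step4
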